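/- Let ν be a measure on (Θ, Σ), let μ1, μ2 be probability measures on Θ with μ_i ≪ ν for i = 1, 2, and let Φ : Θ → ℝ be measurable with 0 < Z_{Φ,μ_i} < ∞ for i = 1, 2 (note that exp(−Φ) > 0 everywhere since Φ is real-valued). Then the posteriors coincide, (μ1)_Φ = (μ2)_Φ, if and only if μ1 = μ2. -/

import Mathlib

open MeasureTheory Real

namespace PaperStmt

variable {Θ : Type*}

/-- The evidence `Z_{Φ,μ} = ∫ exp (-Φ) dμ`. -/
noncomputable def evid [MeasurableSpace Θ] (μ : Measure Θ) (Φ : Θ → ℝ) : ℝ :=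
  ∫ θ, Real.exp (-(Φ θ)) ∂μ

/-- The posterior `μ_Φ`, with density `exp (-Φ) / Z_{Φ,μ}` with respect to `μ`. -/
noncomputable def post [MeasurableSpace Θ] (μ : Measure Θ) (Φ : Θ → ℝ) : Measure Θ :=
  μ.withDensity fun θ => ENNReal.ofReal (Real.exp (-(Φ θ)) / evid μ Φ)

/-- if `μ1, μ2 ≪ ν` are probability measures and `Φ` is a real-valued
measurable misfit with finite positive evidence for both priors, then the posteriors
coincide iff the priors coincide. -/
theorem stmt1 [MeasurableSpace Θ] (ν μ1 μ2 : Measure Θ)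
    [IsProbabilityMeasure μ1] [IsProbabilityMeasure μ2]
    (hac1 : μ1 ≪ ν) (hac2 : μ2 ≪ ν)
    (Φ : Θ → ℝ) (hΦ : Measurable Φ)
    (hint1 : Integrable (fun θ => Real.exp (-(Φ θ))) μ1)
    (hint2 : Integrable (fun θ => Real.exp (-(Φ θ))) μ2)
    (hZ1 : 0 < evid μ1 Φ) (hZ2 : 0 < evid μ2 Φ) :
    post μ1 Φ = post μ2 Φ ↔ μ1 = μ2 := by
  constructor
  · intro h
    set f1 : Θ → ENNReal := fun θ => ENNReal.ofReal (Real.exp (-(Φ θ)) / evid μ1 Φ) with hf1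
    set f2 : Θ → ENNReal := fun θ => ENNReal.ofReal (Real.exp (-(Φ θ)) / evid μ2 Φ) with hf2
    have hm1 : Measurable f1 := by
      exact (hΦ.neg.exp.div_const _).ennreal_ofReal
    have hm2 : Measurable f2 := by
      exact (hΦ.neg.exp.div_const _).ennreal_ofReal
    have hpos1 : ∀ θ, f1 θ ≠ 0 := fun θ =>
      (ENNReal.ofReal_pos.mpr (div_pos (Real.exp_pos _) hZ1)).ne'
    have key : μ1 = (post μ2 Φ).withDensity (fun θ => (f1 θ)⁻¹) := by
      rw [← h]
      exact (withDensity_inv_same hm1 (Filter.Eventually.of_forall hpos1)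
        (Filter.Eventually.of_forall fun θ => ENNReal.ofReal_ne_top)).symm
    have hconst : μ1 = (ENNReal.ofReal (evid μ1 Φ / evid μ2 Φ)) • μ2 := by
      have heq : (f2 * fun θ => (f1 θ)⁻¹)
          = fun _ => ENNReal.ofReal (evid μ1 Φ / evid μ2 Φ) := by
        funext θ
        simp only [Pi.mul_apply, hf1, hf2]
        rw [← ENNReal.ofReal_inv_of_pos (div_pos (Real.exp_pos _) hZ1),
          ← ENNReal.ofReal_mul (by positivity)]
        congr 1
        field_simp
      refine key.trans ?_
      rw [post, ← hf2, ← withDensity_mul μ2 hm2 (show Measurable fun θ => (f1 θ)⁻¹ from hm1.inv), heq, withDensity_const]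
    have hmass : (ENNReal.ofReal (evid μ1 Φ / evid μ2 Φ)) = 1 := by
      have := congrArg (fun m : Measure Θ => m Set.univ) hconst
      simp [Measure.smul_apply, measure_univ] at this
      simpa using this.symm
    rw [hconst, hmass, one_smul]
  · intro h; rw [h]

end PaperStmt
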